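/- arXiv:2504.20916 — 2 statements merged into one kernel-verified Lean document; each statement's English description precedes it below -/
import Mathlib

section
/- Let G be a finite group, let N be a normal subgroup of G, and let ℳ₁, ℳ₂ be disjoint subsets of the set ℳ_G(N) of maximal G-normal subgroups of N. If ℳ_G(N) is minimal in itself, then for all E₁ ⊆ ℳ₁ and E₂ ⊆ ℳ₂ one has |N| / |⋂_{M ∈ E₁ ∪ E₂} M| = (|N| / |⋂_{M ∈ E₁} M|) · (|N| / |⋂_{M ∈ E₂} M|), where intersections over the empty set are taken to be N. -/
/-- `M` is a maximal `G`-normal subgroup of `U`: a normal subgroup of `G` properly contained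
in `U` such that no normal subgroup of `G` lies strictly between `M` and `U`.
`maxGNormal U` is the set of all such subgroups (denoted `ℳ_G(U)`). -/
def maxGNormal {G : Type*} [Group G] (U : Subgroup G) : Set (Subgroup G) :=
  {M | M.Normal ∧ M < U ∧ ∀ V : Subgroup G, V.Normal → M < V → ¬V < U}

/-- The set `ℳ_G(U, V)` of maximal `G`-normal subgroups of `U` that contain `V`. -/
def maxGNormalBtw {G : Type*} [Group G] (U V : Subgroup G) : Set (Subgroup G) :=
  {M | M ∈ maxGNormal U ∧ V ≤ M}

/-- The intersection of a collection `E` of subgroups (all intended to lie below `U`),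
with the convention that the intersection over the empty collection is `U`. -/
def interIn {G : Type*} [Group G] (U : Subgroup G) (E : Set (Subgroup G)) : Subgroup G :=
  U ⊓ sInf E

/-- A collection `ℳ` of (maximal `G`-normal) subgroups of `U` is a minimal subset in itself:
no proper subset `E ⊊ ℳ` has the same intersection as `ℳ` (empty intersection taken as `U`). -/
def MinimalInItself {G : Type*} [Group G] (U : Subgroup G) (ℳ : Set (Subgroup G)) : Prop :=
  ∀ E : Set (Subgroup G), E ⊂ ℳ → interIn U E ≠ interIn U ℳ

section aux

variable {G : Type*} [Group G]

lemma normal_sInf' {E : Set (Subgroup G)} (h : ∀ K ∈ E, K.Normal) : (sInf E).Normal := by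
  constructor
  intro n hn g
  rw [Subgroup.mem_sInf] at hn ⊢
  intro K hK
  exact (h K hK).conj_mem n (hn K hK) g

lemma interIn_normal {N : Subgroup G} (hN : N.Normal) {E : Set (Subgroup G)}
    (h : ∀ K ∈ E, K.Normal) : (interIn N E).Normal := by
  haveI := normal_sInf' h
  haveI := hN
  exact Subgroup.normal_inf_normal N (sInf E)

lemma interIn_le {N : Subgroup G} (E : Set (Subgroup G)) : interIn N E ≤ N := inf_le_left

lemma interIn_anti {N : Subgroup G} {E F : Set (Subgroup G)} (h : E ⊆ F) :
    interIn N F ≤ interIn N E :=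
  inf_le_inf_left N (sInf_le_sInf h)

lemma interIn_insert {N : Subgroup G} (M : Subgroup G) (E : Set (Subgroup G)) :
    interIn N (insert M E) = M ⊓ interIn N E := by
  simp [interIn, sInf_insert, inf_left_comm]

lemma interIn_le_of_mem {N : Subgroup G} {M : Subgroup G} {E : Set (Subgroup G)} (h : M ∈ E) :
    interIn N E ≤ M :=
  le_trans inf_le_right (sInf_le h)

/-- Key: for `M ∈ ℳ_G(N)` and `E ⊆ ℳ_G(N)` with `M ∉ E`, minimality forces
`interIn N E ⊔ M = N`. -/
lemma sup_eq_of_min {N : Subgroup G} (hN : N.Normal) (hmin : MinimalInItself N (maxGNormal N))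
    {M : Subgroup G} (hM : M ∈ maxGNormal N) {E : Set (Subgroup G)}
    (hE : E ⊆ maxGNormal N) (hME : M ∉ E) : interIn N E ⊔ M = N := by
  obtain ⟨hMnorm, hMlt, hmax⟩ := id hM
  have hIle : interIn N E ≤ N := interIn_le E
  have hnotle : ¬ interIn N E ≤ M := by
    intro hle
    apply hmin (maxGNormal N \ {M}) (Set.sdiff_singleton_ssubset.mpr hM)
    apply le_antisymm _ (interIn_anti Set.diff_subset)
    have h1 : interIn N (maxGNormal N \ {M}) ≤ interIn N E :=
      interIn_anti (fun K hK => ⟨hE hK, fun hKM => hME (hKM ▸ hK)⟩)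
    have h2 : maxGNormal N = insert M (maxGNormal N \ {M}) := by
      rw [Set.insert_diff_singleton]
      exact (Set.insert_eq_of_mem hM).symm
    conv_rhs => rw [h2, interIn_insert]
    exact le_inf (h1.trans hle) le_rfl
  have hInorm : (interIn N E).Normal := interIn_normal hN (fun K hK => (hE hK).1)
  haveI := hInorm; haveI := hMnorm
  have hsupnorm : (interIn N E ⊔ M).Normal := Subgroup.sup_normal _ _
  have hlt : M < interIn N E ⊔ M :=
    lt_of_le_of_ne le_sup_right (fun h => hnotle (h ▸ le_sup_left))
  have hsle : interIn N E ⊔ M ≤ N := sup_le hIle hMlt.le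
  exact (hsle.lt_or_eq).resolve_left (hmax _ hsupnorm hlt)

lemma relindex_insert {N : Subgroup G} (hN : N.Normal)
    (hmin : MinimalInItself N (maxGNormal N)) {M : Subgroup G} (hM : M ∈ maxGNormal N)
    {E : Set (Subgroup G)} (hE : E ⊆ maxGNormal N) (hME : M ∉ E) :
    (interIn N (insert M E)).relIndex N = M.relIndex N * (interIn N E).relIndex N := by
  set I := interIn N E with hI
  haveI := hM.1
  have hsup : I ⊔ M = N := sup_eq_of_min hN hmin hM hE hME
  have h1 : interIn N (insert M E) = M ⊓ I := interIn_insert M E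
  rw [h1]
  have h2 : (M ⊓ I).relIndex I * I.relIndex N = (M ⊓ I).relIndex N :=
    Subgroup.relIndex_mul_relIndex _ _ _ inf_le_right (interIn_le E)
  rw [← h2, Subgroup.inf_relIndex_right]
  congr 1
  calc M.relIndex I = M.relIndex (I ⊔ M) := (Subgroup.relIndex_sup_right I M).symm
    _ = M.relIndex N := by rw [hsup]

lemma relindex_union {N : Subgroup G} (hN : N.Normal)
    (hmin : MinimalInItself N (maxGNormal N)) (F : Set (Subgroup G)) (hFfin : F.Finite) :
    ∀ E : Set (Subgroup G), E ⊆ maxGNormal N → F ⊆ maxGNormal N → Disjoint E F →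
      (interIn N (E ∪ F)).relIndex N =
        (interIn N E).relIndex N * (interIn N F).relIndex N := by
  refine Set.Finite.induction_on (motive := fun F _ => ∀ E : Set (Subgroup G),
      E ⊆ maxGNormal N → F ⊆ maxGNormal N → Disjoint E F →
      (interIn N (E ∪ F)).relIndex N =
        (interIn N E).relIndex N * (interIn N F).relIndex N) F hFfin ?_ ?_
  · intro E hE _ _
    simp [interIn, Subgroup.relIndex_self]
  · intro M F' hMF' hF'fin ih E hE hF hdisj
    have hM : M ∈ maxGNormal N := hF (Set.mem_insert _ _)
    have hF' : F' ⊆ maxGNormal N := fun K hK => hF (Set.mem_insert_of_mem _ hK)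
    have hME' : M ∉ E ∪ F' := by
      rintro (hme | hmf)
      · exact hdisj.ne_of_mem hme (Set.mem_insert _ _) rfl
      · exact hMF' hmf
    have hdisj' : Disjoint E F' :=
      hdisj.mono_right (Set.subset_insert _ _)
    have key1 : (interIn N (E ∪ insert M F')).relIndex N
        = M.relIndex N * (interIn N (E ∪ F')).relIndex N := by
      have : E ∪ insert M F' = insert M (E ∪ F') := by
        ext x; simp [or_left_comm, or_comm, or_assoc]
      rw [this]
      exact relindex_insert hN hmin hM (Set.union_subset hE hF') hME'
    have key2 : (interIn N (insert M F')).relIndex N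
        = M.relIndex N * (interIn N F').relIndex N :=
      relindex_insert hN hmin hM hF' hMF'
    rw [key1, ih E hE hF' hdisj', key2]
    ring

lemma card_div_eq_relindex [Finite G] {N H : Subgroup G} (h : H ≤ N) :
    Nat.card N / Nat.card H = H.relIndex N := by
  have e : Nat.card (H.subgroupOf N) = Nat.card H :=
    Nat.card_congr (Subgroup.subgroupOfEquivOfLe h).toEquiv
  have := Subgroup.card_mul_index (H.subgroupOf N)
  rw [e] at this
  rw [← this, Subgroup.relIndex]
  exact Nat.mul_div_cancel_left _ Nat.card_pos

end aux

/-- Lemma 2.2(ii): if `ℳ_G(N)` is minimal in itself and `ℳ₁, ℳ₂ ⊆ ℳ_G(N)` are disjoint,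
then for all `E₁ ⊆ ℳ₁` and `E₂ ⊆ ℳ₂`,
`|N| / |⋂_{M ∈ E₁ ∪ E₂} M| = (|N| / |⋂_{M ∈ E₁} M|) · (|N| / |⋂_{M ∈ E₂} M|)`. -/
theorem stmt_2 {G : Type*} [Group G] [Fintype G] (N : Subgroup G) (hN : N.Normal)
    (ℳ₁ ℳ₂ : Set (Subgroup G)) (hℳ₁ : ℳ₁ ⊆ maxGNormal N) (hℳ₂ : ℳ₂ ⊆ maxGNormal N)
    (hdisj : Disjoint ℳ₁ ℳ₂) (hmin : MinimalInItself N (maxGNormal N)) :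
    ∀ E₁ ⊆ ℳ₁, ∀ E₂ ⊆ ℳ₂,
      Nat.card N / Nat.card (interIn N (E₁ ∪ E₂)) =
        (Nat.card N / Nat.card (interIn N E₁)) * (Nat.card N / Nat.card (interIn N E₂)) := by
  intro E₁ hE₁ E₂ hE₂
  rw [card_div_eq_relindex (interIn_le _), card_div_eq_relindex (interIn_le _),
    card_div_eq_relindex (interIn_le _)]
  exact relindex_union hN hmin E₂ (Set.toFinite E₂) E₁ (hE₁.trans hℳ₁) (hE₂.trans hℳ₂)
    (hdisj.mono hE₁ hE₂)
end

section
/- Let G be a finite group and let U, V be normal subgroups of G with V properly contained in U. If V cannot be expressed as an intersection of some maximal G-normal subgroups of U, then μ_G(W,U) = 0 for every normal subgroup W of G with W ⊆ V. -/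
/-- The group-theoretic Möbius function `μ_G(V, U)`:
`∑_{E ⊆ ℳ_G(U,V), ⋂_{M ∈ E} M = V} (-1)^{|E|}`, empty intersection taken as `U`. -/
noncomputable def muG {G : Type*} [Group G] (V U : Subgroup G) : ℤ :=
  ∑ᶠ E ∈ {E : Set (Subgroup G) | E ⊆ maxGNormalBtw U V ∧ interIn U E = V}, (-1 : ℤ) ^ E.ncard

section Aux

variable {G : Type*} [Group G]

/-- The modular law for (normal) subgroups. -/
private lemma modG (A B C : Subgroup G) (hB : B.Normal) (hAC : A ≤ C) :
    A ⊔ B ⊓ C = (A ⊔ B) ⊓ C := by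
  refine le_antisymm (sup_le (le_inf le_sup_left hAC)
    (le_inf (inf_le_left.trans le_sup_right) inf_le_right)) ?_
  intro x hx
  have hx1 : x ∈ ((A ⊔ B : Subgroup G) : Set G) := hx.1
  have hx2 : x ∈ C := hx.2
  haveI := hB
  rw [Subgroup.mul_normal] at hx1
  obtain ⟨a, ha, b, hb, rfl⟩ := hx1
  have hbC : b ∈ C := by
    have := mul_mem (inv_mem (hAC ha)) hx2
    simpa using this
  exact mul_mem (SetLike.le_def.1 le_sup_left ha)
    (SetLike.le_def.1 le_sup_right (Subgroup.mem_inf.2 ⟨hb, hbC⟩))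

private lemma infNormal {A B : Subgroup G} (hA : A.Normal) (hB : B.Normal) :
    (A ⊓ B).Normal := by
  haveI := hA; haveI := hB; infer_instance

private lemma supNormal {A B : Subgroup G} (hA : A.Normal) (hB : B.Normal) :
    (A ⊔ B).Normal := by
  haveI := hA; haveI := hB; infer_instance

private lemma sInfNormal {S : Set (Subgroup G)} (h : ∀ M ∈ S, M.Normal) : (sInf S).Normal := by
  constructor
  intro x hx g
  rw [Subgroup.mem_sInf] at hx ⊢
  intro p hp
  exact (h p hp).conj_mem x (hx p hp) g

private lemma interInNormal {U : Subgroup G} (hU : U.Normal) {S : Set (Subgroup G)}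
    (h : ∀ M ∈ S, M.Normal) : (interIn U S).Normal :=
  infNormal hU (sInfNormal h)

/-- Every proper normal subgroup of `U` lies below some maximal `G`-normal subgroup of `U`. -/
private lemma exists_coatom [Finite (Subgroup G)] {U N : Subgroup G}
    (hN : N.Normal) (hNU : N < U) : ∃ M ∈ maxGNormal U, N ≤ M := by
  obtain ⟨M, hM, hmax⟩ := Set.Finite.exists_maximalFor id
    {M : Subgroup G | M.Normal ∧ N ≤ M ∧ M < U} (Set.toFinite _) ⟨N, hN, le_rfl, hNU⟩
  refine ⟨M, ⟨hM.1, hM.2.2, ?_⟩, hM.2.1⟩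
  intro Y hYn hMY hYU
  have : M = Y := le_antisymm hMY.le (hmax ⟨hYn, hM.2.1.trans hMY.le, hYU⟩ hMY.le)
  exact hMY.ne this

/-- A normal subgroup squeezed between a maximal `G`-normal subgroup `M` of `U` and `U`
equals `M` or `U`. -/
private lemma coatom_eq {U M X : Subgroup G} (hM : M ∈ maxGNormal U) (hX : X.Normal)
    (hMX : M ≤ X) (hXU : X ≤ U) : X = M ∨ X = U := by
  rcases eq_or_lt_of_le hMX with h | h
  · exact Or.inl h.symm
  · rcases eq_or_lt_of_le hXU with h2 | h2
    · exact Or.inr h2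
    · exact absurd h2 (hM.2.2 X hX h)

/-- If `W` is an intersection of maximal `G`-normal subgroups of `U`, then every normal
`X` with `W ≤ X ≤ U` has a complement in the interval `[W, U]`. -/
private lemma exists_compl [Finite (Subgroup G)] {U W X : Subgroup G}
    (hU : U.Normal) (hX : X.Normal) (hWX : W ≤ X) (hXU : X ≤ U)
    {E : Set (Subgroup G)} (hE : E ⊆ maxGNormalBtw U W) (hEW : interIn U E = W) :
    ∃ D : Subgroup G, D.Normal ∧ W ≤ D ∧ D ≤ U ∧ X ⊓ D = W ∧ X ⊔ D = U := by
  obtain ⟨D, hD, hmin⟩ := Set.Finite.exists_minimalFor id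
    {D : Subgroup G | D.Normal ∧ W ≤ D ∧ D ≤ U ∧ X ⊔ D = U} (Set.toFinite _)
    ⟨U, hU, hWX.trans hXU, le_rfl, sup_eq_right.2 hXU⟩
  obtain ⟨hDn, hWD, hDU, hXD⟩ := hD
  refine ⟨D, hDn, hWD, hDU, ?_, hXD⟩
  by_contra hne
  have hWle : W ≤ X ⊓ D := le_inf hWX hWD
  have hex : ∃ m ∈ E, ¬X ⊓ D ≤ m := by
    by_contra hall
    push_neg at hall
    apply hne
    refine le_antisymm ?_ hWle
    rw [← hEW]
    exact le_inf (inf_le_left.trans hXU) (le_sInf hall)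
  obtain ⟨m, hmE, hmn⟩ := hex
  obtain ⟨hmMax, hWm⟩ := hE hmE
  have hXDn : (X ⊓ D).Normal := infNormal hX hDn
  have hJn : (m ⊔ X ⊓ D).Normal := supNormal hmMax.1 hXDn
  have hJU : m ⊔ X ⊓ D = U := by
    rcases coatom_eq hmMax hJn le_sup_left
        (sup_le hmMax.2.1.le (inf_le_left.trans hXU)) with h | h
    · exact absurd (le_sup_right.trans h.le) hmn
    · exact h
  have hmod : X ⊓ D ⊔ m ⊓ D = D := by
    rw [modG (X ⊓ D) m D hmMax.1 inf_le_right, sup_comm (X ⊓ D) m, hJU, inf_eq_right.2 hDU]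
  have hXD' : X ⊔ m ⊓ D = U := by
    have h1 : X ⊔ D = X ⊔ m ⊓ D := by
      conv_lhs => rw [← hmod]
      rw [← sup_assoc, sup_eq_left.2 (inf_le_left : X ⊓ D ≤ X)]
    rw [← h1, hXD]
  have hDeq : D = m ⊓ D := le_antisymm (hmin
    ⟨infNormal hmMax.1 hDn, le_inf hWm hWD, inf_le_right.trans hDU, hXD'⟩ inf_le_right) inf_le_right
  exact hmn (inf_le_right.trans (hDeq.le.trans inf_le_left))

/-- Key lemma: if `W ≤ V < U` and `W` is an intersection of maximal `G`-normal subgroups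
of `U`, then so is `V`. -/
private lemma key [Finite (Subgroup G)] {U V W : Subgroup G}
    (hU : U.Normal) (hV : V.Normal) (hWV : W ≤ V) (hVU : V < U)
    {E : Set (Subgroup G)} (hE : E ⊆ maxGNormalBtw U W) (hEW : interIn U E = W) :
    ∃ F : Set (Subgroup G), F ⊆ maxGNormal U ∧ F.Nonempty ∧ interIn U F = V := by
  set F := {M : Subgroup G | M ∈ maxGNormal U ∧ V ≤ M} with hF
  obtain ⟨M0, hM0, hVM0⟩ := exists_coatom hV hVU
  refine ⟨F, fun M hM => hM.1, ⟨M0, hM0, hVM0⟩, ?_⟩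
  set d := interIn U F with hd
  have hVd : V ≤ d := le_inf hVU.le (le_sInf fun M hM => hM.2)
  rcases eq_or_lt_of_le hVd with h | hlt2
  · exact h.symm
  exfalso
  have hdn : d.Normal := interInNormal hU fun M hM => hM.1.1
  have hdU : d ≤ U := inf_le_left
  obtain ⟨u, hu, humin⟩ := Set.Finite.exists_minimalFor id
    {u : Subgroup G | u.Normal ∧ V < u ∧ u ≤ d} (Set.toFinite _) ⟨d, hdn, hlt2, le_rfl⟩
  obtain ⟨hun, hVu, hud⟩ := hu
  obtain ⟨D, hDn, hWD, hDU, huD, huDU⟩ :=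
    exists_compl hU hun (hWV.trans hVu.le) (hud.trans hdU) hE hEW
  set m := V ⊔ D with hm
  have hmn : m.Normal := supNormal hV hDn
  have hum : m ⊓ u = V := by
    rw [hm, ← modG V D u hDn hVu.le, inf_comm D u, huD, sup_eq_left.2 hWV]
  have hnum : ¬u ≤ m := by
    intro hle
    have : u ≤ V := hum ▸ le_inf hle le_rfl
    exact hVu.not_ge this
  have hmU : m < U :=
    lt_of_le_of_ne (sup_le (hVU.le) hDU) fun he => hnum (he ▸ hud.trans hdU)
  have hmmax : m ∈ maxGNormal U := by
    refine ⟨hmn, hmU, ?_⟩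
    intro Y hYn hmY hYU2
    set Z := Y ⊓ u with hZ
    have hVZ : V ≤ Z := le_inf (le_sup_left.trans hmY.le) hVu.le
    have hZu : Z ≤ u := inf_le_right
    have hZne_u : Z ≠ u := by
      intro hZu'
      have huY : u ≤ Y := by rw [← hZu']; exact inf_le_left
      have hUY : U ≤ Y := by
        rw [← huDU]; exact sup_le huY (le_sup_right.trans hmY.le)
      exact hYU2.not_ge hUY
    have hYD : Y = D ⊔ Z := by
      have h1 : D ⊔ u ⊓ Y = (D ⊔ u) ⊓ Y := modG D u Y hun (le_sup_right.trans hmY.le)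
      rw [sup_comm D u, huDU, inf_eq_right.2 hYU2.le] at h1
      rw [← h1, inf_comm u Y]
    have hVZlt : V < Z := by
      refine lt_of_le_of_ne hVZ fun he => hmY.ne' ?_
      rw [hYD, ← he, hm, sup_comm]
    have hZmem : Z ∈ {u : Subgroup G | u.Normal ∧ V < u ∧ u ≤ d} :=
      ⟨infNormal hYn hun, hVZlt, hZu.trans hud⟩
    exact hZne_u (le_antisymm hZu (humin hZmem hZu))
  have hmF : m ∈ F := ⟨hmmax, le_sup_left⟩
  have hdm : d ≤ m := inf_le_right.trans (sInf_le hmF)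
  exact hnum (hud.trans hdm)

end Aux

/-- Lemma 3.5: if `V ⊊ U` are normal subgroups of `G` and `V` cannot be expressed as an
intersection of some (nonempty collection of) maximal `G`-normal subgroups of `U`, then
`μ_G(W, U) = 0` for every normal subgroup `W` of `G` with `W ⊆ V`. -/
theorem stmt_8 {G : Type*} [Group G] [Fintype G] (U V : Subgroup G)
    (hU : U.Normal) (hV : V.Normal) (hlt : V < U)
    (h : ¬∃ E : Set (Subgroup G), E ⊆ maxGNormal U ∧ E.Nonempty ∧ interIn U E = V) :
    ∀ W : Subgroup G, W.Normal → W ≤ V → muG W U = 0 := by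
  intro W hW hWV
  have hS : {E : Set (Subgroup G) | E ⊆ maxGNormalBtw U W ∧ interIn U E = W} = ∅ := by
    rw [Set.eq_empty_iff_forall_notMem]
    rintro E ⟨hE1, hE2⟩
    obtain ⟨F, hF1, hF2, hF3⟩ := key hU hV hWV hlt hE1 hE2
    exact h ⟨F, hF1, hF2, hF3⟩
  rw [muG, hS, finsum_mem_empty]
end
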